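/- For any nonnegative random variables X and Y with Y > 0 almost surely, E[ln(1 + X/Y)] = ∫₀^∞ (1/z)·( E[e^{−zY}] − E[e^{−z(X+Y)}] ) dz. In particular, if X and Y are independent, E[ln(1 + X/Y)] = ∫₀^∞ (1/z)·(1 − E[e^{−zX}])·E[e^{−zY}] dz. -/

import Mathlib

open Real MeasureTheory ProbabilityTheory

lemma exp_ioi_integral {t : ℝ} (ht : 0 < t) :
    ∫ z in Set.Ioi (0:ℝ), Real.exp (-z * t) = 1 / t := by
  have h := integral_comp_mul_left_Ioi (fun u => Real.exp (-u)) 0 ht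
  simp only [mul_zero, integral_exp_neg_Ioi, neg_zero, Real.exp_zero, smul_eq_mul, mul_one] at h
  rw [show (fun z => Real.exp (-z * t)) = (fun z => Real.exp (-(t * z))) from
    funext fun z => by ring_nf]
  rw [h, one_div]

lemma exp_ioc_integral {z y x : ℝ} (hz : 0 < z) (hx : 0 ≤ x) :
    ∫ t in Set.Ioc y (x + y), Real.exp (-z * t) =
      (Real.exp (-z * y) - Real.exp (-z * (x + y))) / z := by
  rw [← intervalIntegral.integral_of_le (by linarith : y ≤ x + y)]
  have hderiv : ∀ t ∈ Set.uIcc y (x + y),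
      HasDerivAt (fun t => -Real.exp (-z * t) / z) (Real.exp (-z * t)) t := by
    intro t _
    have h1 : HasDerivAt (fun t : ℝ => -z * t) (-z) t := by
      simpa using (hasDerivAt_id t).const_mul (-z)
    have h2 := (Real.hasDerivAt_exp (-z * t)).comp t h1
    have h3 := (h2.neg).div_const z
    convert h3 using 1
    · rfl
    · rfl
    · rfl
    · field_simp
  rw [intervalIntegral.integral_eq_sub_of_hasDerivAt hderiv
    ((Real.continuous_exp.comp (by continuity)).intervalIntegrable _ _)]
  ring
lemma frullani_prod_int {x y : ℝ} (hx : 0 ≤ x) (hy : 0 < y) :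
    Integrable (Function.uncurry fun (t z : ℝ) => Real.exp (-z * t))
      ((volume.restrict (Set.Ioc y (x + y))).prod (volume.restrict (Set.Ioi 0))) := by
  have hmeas : AEStronglyMeasurable (Function.uncurry fun (t z : ℝ) => Real.exp (-z * t))
      ((volume.restrict (Set.Ioc y (x + y))).prod (volume.restrict (Set.Ioi 0))) := by
    apply Continuous.aestronglyMeasurable
    fun_prop
  rw [integrable_prod_iff hmeas]
  constructor
  · filter_upwards [ae_restrict_mem measurableSet_Ioc] with t ht
    have ht0 : 0 < t := lt_of_lt_of_le hy ht.1.le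
    simpa [mul_comm, IntegrableOn] using exp_neg_integrableOn_Ioi 0 ht0
  · have h1 : IntegrableOn (fun t : ℝ => 1 / t) (Set.Ioc y (x + y)) := by
      rw [← intervalIntegrable_iff_integrableOn_Ioc_of_le (by linarith : y ≤ x + y)]
      exact intervalIntegral.intervalIntegrable_one_div
        (fun u hu => by
          rcases Set.mem_uIcc.1 hu with h | h
          · exact (lt_of_lt_of_le hy h.1).ne'
          · nlinarith [h.1, h.2])
        (by fun_prop)
    apply h1.congr
    filter_upwards [ae_restrict_mem measurableSet_Ioc] with t ht
    have ht0 : 0 < t := lt_of_lt_of_le hy ht.1.le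
    simp only [Function.uncurry, Real.norm_eq_abs, Real.abs_exp]
    exact (exp_ioi_integral ht0).symm

lemma frullani_integral {x y : ℝ} (hx : 0 ≤ x) (hy : 0 < y) :
    ∫ z in Set.Ioi (0:ℝ), (Real.exp (-z * y) - Real.exp (-z * (x + y))) / z =
      Real.log (1 + x / y) := by
  have hswap := integral_integral_swap (f := fun (t z : ℝ) => Real.exp (-z * t))
    (frullani_prod_int hx hy)
  have hlhs : (∫ t in Set.Ioc y (x + y), ∫ z in Set.Ioi (0:ℝ), Real.exp (-z * t)) =
      Real.log (1 + x / y) := by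
    rw [setIntegral_congr_fun measurableSet_Ioc
      (fun t ht => exp_ioi_integral (lt_of_lt_of_le hy ht.1.le))]
    rw [← intervalIntegral.integral_of_le (by linarith : y ≤ x + y),
      integral_one_div (fun h => by
        rcases Set.mem_uIcc.1 h with h | h
        · exact absurd h.1 (not_le.2 hy)
        · nlinarith [h.1, h.2])]
    rw [show (x + y) / y = 1 + x / y by rw [add_div, div_self hy.ne', add_comm]]
  have hrhs : (∫ z in Set.Ioi (0:ℝ), ∫ t in Set.Ioc y (x + y), Real.exp (-z * t)) =
      ∫ z in Set.Ioi (0:ℝ), (Real.exp (-z * y) - Real.exp (-z * (x + y))) / z := by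
    exact setIntegral_congr_fun measurableSet_Ioi
      (fun z hz => exp_ioc_integral hz hx)
  rw [← hrhs, ← hswap, hlhs]

lemma frullani_integrable {x y : ℝ} (hx : 0 ≤ x) (hy : 0 < y) :
    IntegrableOn (fun z : ℝ => (Real.exp (-z * y) - Real.exp (-z * (x + y))) / z)
      (Set.Ioi (0:ℝ)) := by
  have h := (frullani_prod_int hx hy).integral_prod_right
  apply h.congr
  filter_upwards [ae_restrict_mem measurableSet_Ioi] with z hz
  exact exp_ioc_integral hz hx
theorem log_one_add_ratio_laplace_repr
    {Ω : Type*} [MeasureSpace Ω] (μ : Measure Ω) [IsProbabilityMeasure μ]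
    (X Y : Ω → ℝ) (hX : Measurable X) (hY : Measurable Y)
    (hXpos : ∀ ω, 0 ≤ X ω) (hYpos : ∀ᵐ ω ∂μ, 0 < Y ω)
    (hint : Integrable (fun ω => Real.log (1 + X ω / Y ω)) μ) :
    (∫ ω, Real.log (1 + X ω / Y ω) ∂μ) =
      ∫ z in Set.Ioi (0 : ℝ), (1 / z) *
        ((∫ ω, Real.exp (-z * Y ω) ∂μ) - ∫ ω, Real.exp (-z * (X ω + Y ω)) ∂μ) ∧
    (IndepFun X Y μ →
      (∫ ω, Real.log (1 + X ω / Y ω) ∂μ) =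
        ∫ z in Set.Ioi (0 : ℝ), (1 / z) *
          (1 - ∫ ω, Real.exp (-z * X ω) ∂μ) * ∫ ω, Real.exp (-z * Y ω) ∂μ) := by
  set g : Ω → ℝ → ℝ :=
    fun ω z => (Real.exp (-z * Y ω) - Real.exp (-z * (X ω + Y ω))) / z with hg
  have hgm : Measurable (Function.uncurry g) := by
    apply Measurable.div
    · exact ((measurable_snd.neg.mul (hY.comp measurable_fst)).exp).sub
        ((measurable_snd.neg.mul ((hX.comp measurable_fst).add (hY.comp measurable_fst))).exp)
    · exact measurable_snd
  -- a.e. integrability and value of the inner integral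
  have hae1 : ∀ᵐ ω ∂μ, IntegrableOn (g ω) (Set.Ioi (0:ℝ)) := by
    filter_upwards [hYpos] with ω hω
    exact frullani_integrable (hXpos ω) hω
  have hae2 : ∀ᵐ ω ∂μ, (∫ z in Set.Ioi (0:ℝ), g ω z) = Real.log (1 + X ω / Y ω) := by
    filter_upwards [hYpos] with ω hω
    exact frullani_integral (hXpos ω) hω
  -- product integrability
  have hprod : Integrable (Function.uncurry g) (μ.prod (volume.restrict (Set.Ioi 0))) := by
    rw [integrable_prod_iff hgm.aestronglyMeasurable]
    refine ⟨?_, ?_⟩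
    · exact hae1
    · apply hint.congr
      filter_upwards [hYpos, hae2] with ω hω hval
      have hnorm : ∀ z ∈ Set.Ioi (0:ℝ), ‖g ω z‖ = g ω z := by
        intro z hz
        apply Real.norm_of_nonneg
        apply div_nonneg _ (le_of_lt hz)
        have hz0 : (0:ℝ) < z := hz
        have : -z * (X ω + Y ω) ≤ -z * Y ω := by nlinarith [mul_nonneg hz0.le (hXpos ω)]
        simpa using Real.exp_le_exp.2 this
      simp only [Function.uncurry_apply_pair]
      rw [setIntegral_congr_fun measurableSet_Ioi hnorm, hval]
  have hswap := integral_integral_swap (f := g) hprod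
  have hL : (∫ ω, Real.log (1 + X ω / Y ω) ∂μ) =
      ∫ z in Set.Ioi (0:ℝ), ∫ ω, g ω z ∂μ := by
    rw [← hswap]
    exact integral_congr_ae (hae2.mono fun ω h => h.symm)
  have key : ∀ z ∈ Set.Ioi (0:ℝ), (∫ ω, g ω z ∂μ) = (1 / z) *
      ((∫ ω, Real.exp (-z * Y ω) ∂μ) - ∫ ω, Real.exp (-z * (X ω + Y ω)) ∂μ) := by
    intro z hz
    have hz' : (0:ℝ) < z := hz
    have hIA : Integrable (fun ω => Real.exp (-z * Y ω)) μ := by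
      refine ⟨((hY.const_mul (-z)).exp).aestronglyMeasurable,
        HasFiniteIntegral.of_bounded (C := 1) ?_⟩
      filter_upwards [hYpos] with ω hω
      rw [Real.norm_of_nonneg (Real.exp_pos _).le]
      exact Real.exp_le_one_iff.2 (by nlinarith)
    have hIB : Integrable (fun ω => Real.exp (-z * (X ω + Y ω))) μ := by
      refine ⟨(((hX.add hY).const_mul (-z)).exp).aestronglyMeasurable,
        HasFiniteIntegral.of_bounded (C := 1) ?_⟩
      filter_upwards [hYpos] with ω hω
      rw [Real.norm_of_nonneg (Real.exp_pos _).le]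
      exact Real.exp_le_one_iff.2 (by nlinarith [hXpos ω])
    rw [hg]
    simp only
    rw [integral_div, integral_sub hIA hIB]
    ring
  have first : (∫ ω, Real.log (1 + X ω / Y ω) ∂μ) =
      ∫ z in Set.Ioi (0 : ℝ), (1 / z) *
        ((∫ ω, Real.exp (-z * Y ω) ∂μ) - ∫ ω, Real.exp (-z * (X ω + Y ω)) ∂μ) := by
    rw [hL]
    exact setIntegral_congr_fun measurableSet_Ioi key
  refine ⟨first, fun hInd => ?_⟩
  rw [first]
  apply setIntegral_congr_fun measurableSet_Ioi
  intro z hz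
  have hcomp : IndepFun (fun ω => Real.exp (-z * X ω)) (fun ω => Real.exp (-z * Y ω)) μ :=
    hInd.comp (measurable_const.mul measurable_id).exp (measurable_const.mul measurable_id).exp
  have hprod2 : (∫ ω, Real.exp (-z * (X ω + Y ω)) ∂μ) =
      (∫ ω, Real.exp (-z * X ω) ∂μ) * ∫ ω, Real.exp (-z * Y ω) ∂μ := by
    have := hcomp.integral_fun_mul_eq_mul_integral
      ((measurable_const.mul hX).exp).aestronglyMeasurable
      ((measurable_const.mul hY).exp).aestronglyMeasurable
    rw [← this]
    apply integral_congr_ae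
    filter_upwards with ω
    simp [Pi.mul_apply, ← Real.exp_add, mul_add]
  dsimp only
  rw [hprod2]
  ring
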